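/- The group of orientation-preserving isometries of the 3-sphere is fixating. Equivalently: let G be a subgroup of the orthogonal group O(4) (real orthogonal 4×4 matrices) all of whose elements have determinant 1 (i.e., G ≤ SO(4)). If every A ∈ G has a nonzero fixed vector in ℝ⁴ (A·v = v for some v ≠ 0), then there exists a nonzero vector v ∈ ℝ⁴ with A·v = v for every A ∈ G. -/

import Mathlib

open Matrix Polynomial MeasureTheory

instance : MeasurableSpace (Matrix (Fin 4) (Fin 4) ℝ) := borel _

instance : BorelSpace (Matrix (Fin 4) (Fin 4) ℝ) := ⟨rfl⟩

instance : IsTopologicalGroup ↥(Matrix.orthogonalGroup (Fin 4) ℝ) where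
  continuous_mul := by
    apply continuous_induced_rng.2
    exact (continuous_subtype_val.comp continuous_fst).matrix_mul
      (continuous_subtype_val.comp continuous_snd)
  continuous_inv := by
    apply continuous_induced_rng.2
    exact continuous_star.comp continuous_subtype_val

instance : CompactSpace ↥(Matrix.orthogonalGroup (Fin 4) ℝ) := by
  suffices h : IsCompact (Matrix.orthogonalGroup (Fin 4) ℝ : Set (Matrix (Fin 4) (Fin 4) ℝ)) from
    isCompact_iff_compactSpace.mp h
  have hsub : (Matrix.orthogonalGroup (Fin 4) ℝ : Set (Matrix (Fin 4) (Fin 4) ℝ)) ⊆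
      Set.pi Set.univ (fun _ : Fin 4 => Set.pi Set.univ fun _ : Fin 4 => Set.Icc (-1:ℝ) 1) := by
    intro M hM
    have h1 : star M * M = 1 := (Matrix.mem_orthogonalGroup_iff' (Fin 4) ℝ).mp hM
    rw [Matrix.star_eq_conjTranspose, Matrix.conjTranspose_eq_transpose_of_trivial] at h1
    apply Set.mem_univ_pi.mpr
    intro i
    rw [Set.mem_univ_pi]
    intro j
    have hdiag : ∑ k, M k j * M k j = 1 := by
      have := congrFun (congrFun h1 j) j
      simpa [Matrix.mul_apply, Matrix.one_apply] using this
    have hle : M i j ^ 2 ≤ 1 := by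
      rw [← hdiag]
      have h := Finset.single_le_sum (f := fun k => M k j * M k j)
        (fun k _ => mul_self_nonneg _) (Finset.mem_univ i)
      replace h : M i j * M i j ≤ ∑ k, M k j * M k j := h
      nlinarith [h]
    constructor <;> nlinarith [hle]
  have hclosed : IsClosed (Matrix.orthogonalGroup (Fin 4) ℝ : Set (Matrix (Fin 4) (Fin 4) ℝ)) := by
    have he : (Matrix.orthogonalGroup (Fin 4) ℝ : Set (Matrix (Fin 4) (Fin 4) ℝ))
        = (fun M : Matrix (Fin 4) (Fin 4) ℝ => M * star M) ⁻¹' {1} := by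
      ext M
      simp [Matrix.mem_orthogonalGroup_iff, Matrix.star_eq_conjTranspose, Matrix.conjTranspose_eq_transpose_of_trivial]
    rw [he]
    exact IsClosed.preimage (continuous_id.matrix_mul continuous_id.star) isClosed_singleton
  exact IsCompact.of_isClosed_subset
    (isCompact_univ_pi fun _ => isCompact_univ_pi fun _ => isCompact_Icc) hclosed hsub

lemma my_eval_charpoly (M : Matrix (Fin 4) (Fin 4) ℝ) (t : ℝ) :
    M.charpoly.eval t = (t • (1 : Matrix (Fin 4) (Fin 4) ℝ) - M).det := by
  rw [Matrix.charpoly, ← Polynomial.coe_evalRingHom, RingHom.map_det]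
  congr 1
  ext i j
  by_cases h : i = j <;>
    simp [h, Matrix.charmatrix_apply, Matrix.one_apply, Matrix.smul_apply]

/-- Expansion of a degree-4 monic real polynomial. -/
lemma my_eval_expand (M : Matrix (Fin 4) (Fin 4) ℝ) (t : ℝ) :
    M.charpoly.eval t = M.charpoly.coeff 0 + M.charpoly.coeff 1 * t +
      M.charpoly.coeff 2 * t ^ 2 + M.charpoly.coeff 3 * t ^ 3 + t ^ 4 := by
  have hd : M.charpoly.natDegree = 4 := by
    simpa using M.charpoly_natDegree_eq_dim
  have h4 : M.charpoly.coeff 4 = 1 := by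
    have := M.charpoly_monic
    rw [Polynomial.Monic, Polynomial.leadingCoeff, hd] at this
    exact this
  rw [Polynomial.eval_eq_sum_range' (by omega : M.charpoly.natDegree < 5) t]
  simp [Finset.sum_range_succ, h4]

lemma my_trace_nonneg (A : Matrix (Fin 4) (Fin 4) ℝ)
    (horth : Aᵀ * A = 1) (hdet : A.det = 1)
    (v : Fin 4 → ℝ) (hv : v ≠ 0) (hfix : A.mulVec v = v) :
    0 ≤ A.trace := by
  set p := A.charpoly with hp
  -- coefficients
  have hc0 : p.coeff 0 = 1 := by
    have h := A.det_eq_sign_charpoly_coeff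
    rw [hdet] at h
    norm_num [Fintype.card_fin] at h
    exact h.symm
  have htr : A.trace = -p.coeff 3 := by
    simpa using A.trace_eq_neg_charpoly_coeff
  -- eval 1 = 0
  have h1 : p.eval 1 = 0 := by
    rw [my_eval_charpoly]
    have hker : ((1:ℝ) • (1 : Matrix (Fin 4) (Fin 4) ℝ) - A).mulVec v = 0 := by
      simp [Matrix.sub_mulVec, hfix]
    rw [← Matrix.exists_mulVec_eq_zero_iff]
    exact ⟨v, hv, hker⟩
  -- reciprocity: p.eval t = t^4 * p.eval (1/t) for t ≠ 0
  have hAAT : A * Aᵀ = 1 := mul_eq_one_comm.mp horth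
  have hrec : ∀ t : ℝ, t ≠ 0 → p.eval t = t ^ 4 * p.eval t⁻¹ := by
    intro t ht
    have e1 : p.eval t = (t • (1 : Matrix (Fin 4) (Fin 4) ℝ) - Aᵀ).det := by
      rw [my_eval_charpoly]
      rw [← Matrix.det_transpose (t • (1 : Matrix (Fin 4) (Fin 4) ℝ) - A)]
      congr 1
      simp [Matrix.transpose_sub, Matrix.transpose_smul]
    have e2 : (t • (1 : Matrix (Fin 4) (Fin 4) ℝ) - Aᵀ).det
        = (t • A - 1 : Matrix (Fin 4) (Fin 4) ℝ).det := by
      have : A * (t • (1 : Matrix (Fin 4) (Fin 4) ℝ) - Aᵀ) = t • A - 1 := by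
        rw [Matrix.mul_sub, hAAT]
        simp [Matrix.mul_smul]
      calc (t • (1 : Matrix (Fin 4) (Fin 4) ℝ) - Aᵀ).det
          = A.det * (t • (1 : Matrix (Fin 4) (Fin 4) ℝ) - Aᵀ).det := by rw [hdet, one_mul]
        _ = (A * (t • (1 : Matrix (Fin 4) (Fin 4) ℝ) - Aᵀ)).det := (Matrix.det_mul _ _).symm
        _ = (t • A - 1 : Matrix (Fin 4) (Fin 4) ℝ).det := by rw [this]
    have e3 : (t • A - 1 : Matrix (Fin 4) (Fin 4) ℝ).det
        = t ^ 4 * p.eval t⁻¹ := by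
      have heq : (t • A - 1 : Matrix (Fin 4) (Fin 4) ℝ)
          = (-t) • (t⁻¹ • (1 : Matrix (Fin 4) (Fin 4) ℝ) - A) := by
        rw [neg_smul, smul_sub, smul_smul, mul_inv_cancel₀ ht, one_smul, neg_sub]
      rw [heq, Matrix.det_smul, ← my_eval_charpoly]
      rw [Fintype.card_fin]
      ring
    rw [e1, e2, e3]
  -- derive coefficient relations
  set c0 := p.coeff 0
  set c1 := p.coeff 1
  set c2 := p.coeff 2
  set c3 := p.coeff 3
  have hex : ∀ t : ℝ, p.eval t = c0 + c1 * t + c2 * t ^ 2 + c3 * t ^ 3 + t ^ 4 :=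
    fun t => my_eval_expand A t
  have h2 := hrec 2 (by norm_num)
  rw [hex 2, hex (2⁻¹)] at h2
  have hc13 : c1 = c3 := by rw [hc0] at h2; norm_num at h2; linarith
  have hc2 : c2 = -2 - 2 * c3 := by
    have := h1
    rw [hex 1, hc0, hc13] at this
    linarith
  -- now suppose trace < 0
  by_contra hneg
  push_neg at hneg
  set a := A.trace with ha
  have hc3 : c3 = -a := by rw [htr]; ring
  -- quadratic q(t) = t^2 - (a-2) t + 1 has a root r < -1
  set q : ℝ → ℝ := fun t => t ^ 2 - (a - 2) * t + 1 with hq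
  have hqa : q (a - 3) = 4 - a := by simp [hq]; ring
  have hqm : q (-1) = a := by simp [hq]; ring
  have hcont : ContinuousOn q (Set.Icc (a - 3) (-1)) := by
    apply Continuous.continuousOn
    simp only [hq]
    fun_prop
  have hsub : Set.Icc (q (-1)) (q (a - 3)) ⊆ q '' Set.Icc (a - 3) (-1) :=
    intermediate_value_Icc' (by linarith) hcont
  have h0mem : (0 : ℝ) ∈ Set.Icc (q (-1)) (q (a - 3)) := by
    rw [hqa, hqm]; constructor <;> linarith
  obtain ⟨r, hrmem, hqr⟩ := hsub h0mem
  have hrne : r ≠ -1 := by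
    intro h; rw [h, hqm] at hqr; linarith
  have hrlt : r < -1 := lt_of_le_of_ne hrmem.2 hrne
  -- r is a real eigenvalue of A
  have hproot : p.eval r = 0 := by
    have hpr : p.eval r = (r - 1) ^ 2 * q r := by
      rw [hex r, hc0, hc13, hc2, hc3]
      simp only [hq]
      ring
    rw [hpr, hqr, mul_zero]
  have hdet0 : (r • (1 : Matrix (Fin 4) (Fin 4) ℝ) - A).det = 0 := by
    rw [← my_eval_charpoly]; exact hproot
  obtain ⟨w, hw, hw0⟩ := (Matrix.exists_mulVec_eq_zero_iff).mpr hdet0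
  have hAw : A.mulVec w = r • w := by
    have : (r • (1 : Matrix (Fin 4) (Fin 4) ℝ) - A).mulVec w
        = r • w - A.mulVec w := by
      rw [Matrix.sub_mulVec, Matrix.smul_mulVec, Matrix.one_mulVec]
    rw [this] at hw0
    linear_combination (norm := module) -hw0
  have hiso : (A.mulVec w) ⬝ᵥ (A.mulVec w) = w ⬝ᵥ w := by
    rw [Matrix.dotProduct_mulVec, ← Matrix.vecMul_transpose, Matrix.vecMul_vecMul,
      horth, Matrix.vecMul_one]
  rw [hAw] at hiso
  have hsq : (r ^ 2 - 1) * (w ⬝ᵥ w) = 0 := by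
    have : (r • w) ⬝ᵥ (r • w) = r ^ 2 * (w ⬝ᵥ w) := by
      rw [smul_dotProduct, dotProduct_smul]
      simp [smul_eq_mul]; ring
    rw [this] at hiso
    linarith
  have hwne : w ⬝ᵥ w ≠ 0 := fun h => hw ((dotProduct_self_eq_zero).mp h)
  have : r ^ 2 - 1 > 0 := by nlinarith
  rcases mul_eq_zero.mp hsq with h | h
  · linarith
  · exact hwne h

/-- The group of orientation-preserving isometries of the 3-sphere is
fixating: if `G` is a subgroup of the orthogonal group `O(4)` all of whose
elements have determinant `1`, and every `A ∈ G` has a nonzero fixed vector in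
`ℝ⁴`, then some nonzero vector of `ℝ⁴` is fixed by every element of `G`. -/
theorem so4_gaf_gag
    (G : Subgroup (Matrix.orthogonalGroup (Fin 4) ℝ))
    (hdet : ∀ A ∈ G, Matrix.det (A : Matrix (Fin 4) (Fin 4) ℝ) = 1)
    (hGAF : ∀ A ∈ G, ∃ v : Fin 4 → ℝ, v ≠ 0 ∧
      Matrix.mulVec (A : Matrix (Fin 4) (Fin 4) ℝ) v = v) :
    ∃ v : Fin 4 → ℝ, v ≠ 0 ∧ ∀ A ∈ G,
      Matrix.mulVec (A : Matrix (Fin 4) (Fin 4) ℝ) v = v := by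
  classical
  set O := Matrix.orthogonalGroup (Fin 4) ℝ with hO
  set K : Subgroup ↥O := G.topologicalClosure with hK
  haveI : CompactSpace ↥K := by
    suffices h : IsCompact (K : Set ↥O) from isCompact_iff_compactSpace.mp h
    exact (Subgroup.isClosed_topologicalClosure G).isCompact
  haveI : Nonempty ↥K := ⟨1⟩
  haveI : BorelSpace ↥O := Subtype.borelSpace _
  haveI : BorelSpace ↥K := Subtype.borelSpace _
  let K₀ : TopologicalSpace.PositiveCompacts ↥K :=
    ⟨⟨Set.univ, isCompact_univ⟩, by rw [interior_univ]; exact Set.univ_nonempty⟩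
  let μ : Measure ↥K := Measure.haarMeasure K₀
  haveI : μ.IsHaarMeasure := Measure.isHaarMeasure_haarMeasure K₀
  -- the matrix entries, as functions on K
  let E : ↥K → Matrix (Fin 4) (Fin 4) ℝ := fun g => ((g : ↥O) : Matrix (Fin 4) (Fin 4) ℝ)
  have hEcont : Continuous E := continuous_subtype_val.comp continuous_subtype_val
  have hint : ∀ i j, Integrable (fun g : ↥K => E g i j) μ := by
    intro i j
    apply Continuous.integrable_of_hasCompactSupport (hEcont.matrix_elem i j)
    exact isCompact_univ.of_isClosed_subset (isClosed_tsupport _) (Set.subset_univ _)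
  -- the averaged matrix
  let P : Matrix (Fin 4) (Fin 4) ℝ := Matrix.of fun i j => ∫ g, E g i j ∂μ
  -- every element of G fixes the columns of P
  have key : ∀ A ∈ G, ∀ i j, ∑ k, (A : Matrix (Fin 4) (Fin 4) ℝ) i k * P k j = P i j := by
    intro A hA i j
    set A' : ↥K := ⟨A, G.le_topologicalClosure hA⟩ with hA'
    calc ∑ k, (A : Matrix (Fin 4) (Fin 4) ℝ) i k * P k j
        = ∑ k, ∫ g, (A : Matrix (Fin 4) (Fin 4) ℝ) i k * E g k j ∂μ := by
          refine Finset.sum_congr rfl fun k _ => ?_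
          rw [MeasureTheory.integral_const_mul]
          rfl
      _ = ∫ g, ∑ k, (A : Matrix (Fin 4) (Fin 4) ℝ) i k * E g k j ∂μ :=
          (MeasureTheory.integral_finset_sum _ fun k _ => (hint k j).const_mul _).symm
      _ = ∫ g, E (A' * g) i j ∂μ := by
          refine MeasureTheory.integral_congr_ae (Filter.Eventually.of_forall fun g => ?_)
          simp [E, Matrix.mul_apply, A']
      _ = ∫ g, E g i j ∂μ :=
          MeasureTheory.integral_mul_left_eq_self (fun g => E g i j) A'
      _ = P i j := rfl
  -- trace of every element of K is nonnegative
  have htrK : ∀ g : ↥K, 0 ≤ (E g).trace := by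
    intro g
    have hGS : (G : Set ↥O) ⊆ {x : ↥O | 0 ≤ ((x : Matrix (Fin 4) (Fin 4) ℝ)).trace} := by
      intro x hx
      obtain ⟨v, hv, hfix⟩ := hGAF x hx
      have horth : (x : Matrix (Fin 4) (Fin 4) ℝ)ᵀ * (x : Matrix (Fin 4) (Fin 4) ℝ) = 1 := by
        have h1 := (Matrix.mem_orthogonalGroup_iff' (Fin 4) ℝ).mp x.2
        exact h1
      exact my_trace_nonneg _ horth (hdet x hx) v hv hfix
    have hSclosed : IsClosed {x : ↥O | 0 ≤ ((x : Matrix (Fin 4) (Fin 4) ℝ)).trace} :=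
      isClosed_le continuous_const (continuous_subtype_val.matrix_trace)
    have hmem : (g : ↥O) ∈ closure (G : Set ↥O) := by
      rw [← Subgroup.topologicalClosure_coe]
      exact g.2
    exact closure_minimal hGS hSclosed hmem
  -- the trace integral is positive
  have htrint : Integrable (fun g : ↥K => (E g).trace) μ := by
    have : (fun g : ↥K => (E g).trace) = fun g => ∑ i, E g i i := by
      funext g; rfl
    rw [this]
    exact MeasureTheory.integrable_finset_sum _ fun i _ => hint i i
  have hpos : 0 < ∫ g, (E g).trace ∂μ := by
    rw [MeasureTheory.integral_pos_iff_support_of_nonneg htrK htrint]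
    have hU : IsOpen {g : ↥K | 0 < (E g).trace} :=
      isOpen_lt continuous_const (hEcont.matrix_trace)
    have h1 : (1 : ↥K) ∈ {g : ↥K | 0 < (E g).trace} := by
      have : E (1 : ↥K) = 1 := rfl
      simp only [Set.mem_setOf_eq, this, Matrix.trace_one]
      norm_num
    have hμU : 0 < μ {g : ↥K | 0 < (E g).trace} := hU.measure_pos μ ⟨1, h1⟩
    refine lt_of_lt_of_le hμU (measure_mono ?_)
    intro x hx
    exact ne_of_gt hx
  -- hence the trace of P is positive, so P has a nonzero diagonal entry
  have htrP : 0 < ∑ i, P i i := by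
    have : ∑ i, P i i = ∫ g, (E g).trace ∂μ := by
      have h1 : ∀ i, P i i = ∫ g, E g i i ∂μ := fun _ => rfl
      simp only [h1]
      rw [← MeasureTheory.integral_finset_sum _ fun i _ => hint i i]
      rfl
    rw [this]
    exact hpos
  obtain ⟨j, hj⟩ : ∃ j, P j j ≠ 0 := by
    by_contra h
    push_neg at h
    simp only [h, Finset.sum_const_zero] at htrP
    exact lt_irrefl 0 htrP
  refine ⟨fun i => P i j, ?_, ?_⟩
  · intro h
    exact hj (congrFun h j)
  · intro A hA
    funext i
    show ∑ k, (A : Matrix (Fin 4) (Fin 4) ℝ) i k * P k j = P i j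
    exact key A hA i j
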